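/- Let G be any real n×n matrix satisfying GW = 0, GZ̃ = Z̃, and G_{ii} = 0 for every i. Then, without any homoskedasticity assumption (allowing Var(ν_i) and Cov(ε_i, ν_i) to vary arbitrarily across i), E[xᵀGx] = ‖ℓ̃‖² and E[yᵀGx] = β·‖ℓ̃‖². In particular, if ℓ̃ ≠ 0 then E[yᵀGx]/E[xᵀGx] = β exactly. -/

import Mathlib

open MeasureTheory Matrix BigOperators

/-- For any `G` with `G * W = 0`, `G * Z̃ = Z̃` and zero diagonal, without any
homoskedasticity assumption, `E[xᵀGx] = ‖ℓ̃‖²` and `E[yᵀGx] = β·‖ℓ̃‖²`; in particular if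
`ℓ̃ ≠ 0` then `E[yᵀGx]/E[xᵀGx] = β` exactly. -/
theorem stmt1
    {Ω : Type*} [MeasurableSpace Ω] (μ : Measure Ω) [IsProbabilityMeasure μ]
    (n K L : ℕ) (hn : 1 ≤ n) (hK : 1 ≤ K) (hL : 1 ≤ L)
    (W : Matrix (Fin n) (Fin L) ℝ) (Z : Matrix (Fin n) (Fin K) ℝ)
    (hWrank : W.rank = L) (hZrank : Z.rank = K) (hWZ : Wᵀ * Z = 0)
    (ε ν : Ω → Fin n → ℝ)
    (hmeas : ∀ i, Measurable (fun ω => (ε ω i, ν ω i)))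
    (hindep : ProbabilityTheory.iIndepFun
      (fun i ω => (ε ω i, ν ω i)) μ)
    (hεL2 : ∀ i, MemLp (fun ω => ε ω i) 2 μ)
    (hνL2 : ∀ i, MemLp (fun ω => ν ω i) 2 μ)
    (α : Fin L → ℝ) (π : Fin K → ℝ) (δ : Fin L → ℝ) (β : ℝ)
    (hνmean : ∀ i, ∫ ω, ν ω i ∂μ = 0)
    (hεmean : ∀ i, ∫ ω, ε ω i ∂μ = W i ⬝ᵥ α)
    (x y : Ω → Fin n → ℝ) (ℓ : Fin n → ℝ)
    (hx : ∀ ω, x ω = Z *ᵥ π + W *ᵥ δ + ν ω)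
    (hℓ : ℓ = Z *ᵥ π)
    (hy : ∀ ω, y ω = β • x ω + ε ω)
    (G : Matrix (Fin n) (Fin n) ℝ)
    (hGW : G * W = 0) (hGZ : G * Z = Z) (hGdiag : ∀ i, G i i = 0) :
    (∫ ω, x ω ⬝ᵥ (G *ᵥ x ω) ∂μ = ℓ ⬝ᵥ ℓ) ∧
    (∫ ω, y ω ⬝ᵥ (G *ᵥ x ω) ∂μ = β * (ℓ ⬝ᵥ ℓ)) ∧
    (ℓ ≠ 0 →
      (∫ ω, y ω ⬝ᵥ (G *ᵥ x ω) ∂μ) / (∫ ω, x ω ⬝ᵥ (G *ᵥ x ω) ∂μ) = β) := by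
  classical
  set c : Fin n → ℝ := Z *ᵥ π + W *ᵥ δ with hc
  set m : Fin n → ℝ := W *ᵥ α with hm
  have hx' : ∀ ω i, x ω i = c i + ν ω i := by
    intro ω i; rw [hx]; rfl
  have hy' : ∀ ω i, y ω i = β * (c i + ν ω i) + ε ω i := by
    intro ω i; rw [hy]; simp [hx' ω i]
  -- integrability
  have hνint : ∀ i, Integrable (fun ω => ν ω i) μ := fun i => (hνL2 i).integrable one_le_two
  have hεint : ∀ i, Integrable (fun ω => ε ω i) μ := fun i => (hεL2 i).integrable one_le_two
  have hxint : ∀ i, Integrable (fun ω => x ω i) μ := by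
    intro i
    have : (fun ω => x ω i) = fun ω => c i + ν ω i := by funext ω; exact hx' ω i
    rw [this]; exact (integrable_const _).add (hνint i)
  have hyint : ∀ i, Integrable (fun ω => y ω i) μ := by
    intro i
    have : (fun ω => y ω i) = fun ω => β * x ω i + ε ω i := by
      funext ω; rw [hy]; simp
    rw [this]
    exact ((hxint i).const_mul β).add (hεint i)
  -- means
  have hxmean : ∀ i, ∫ ω, x ω i ∂μ = c i := by
    intro i
    have : (fun ω => x ω i) = fun ω => c i + ν ω i := by funext ω; exact hx' ω i
    rw [this, integral_add (integrable_const _) (hνint i), hνmean i, integral_const]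
    simp
  have hymean : ∀ i, ∫ ω, y ω i ∂μ = β * c i + m i := by
    intro i
    have : (fun ω => y ω i) = fun ω => β * x ω i + ε ω i := by
      funext ω; rw [hy]; simp
    rw [this, integral_add ((hxint i).const_mul β) (hεint i),
      integral_const_mul, hxmean i, hεmean i]
    rfl
  -- independence
  have hindxx : ∀ i j, i ≠ j →
      ProbabilityTheory.IndepFun (fun ω => x ω i) (fun ω => x ω j) μ := by
    intro i j hij
    have h := (hindep.indepFun hij).comp
      (φ := fun p : ℝ × ℝ => c i + p.2) (ψ := fun p : ℝ × ℝ => c j + p.2)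
      (measurable_snd.const_add _) (measurable_snd.const_add _)
    have e1 : (fun ω => x ω i) = (fun p : ℝ × ℝ => c i + p.2) ∘ (fun ω => (ε ω i, ν ω i)) := by
      funext ω; exact hx' ω i
    have e2 : (fun ω => x ω j) = (fun p : ℝ × ℝ => c j + p.2) ∘ (fun ω => (ε ω j, ν ω j)) := by
      funext ω; exact hx' ω j
    rw [e1, e2]; exact h
  have hindyx : ∀ i j, i ≠ j →
      ProbabilityTheory.IndepFun (fun ω => y ω i) (fun ω => x ω j) μ := by
    intro i j hij
    have h := (hindep.indepFun hij).comp
      (φ := fun p : ℝ × ℝ => β * (c i + p.2) + p.1) (ψ := fun p : ℝ × ℝ => c j + p.2)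
      (((measurable_snd.const_add (c i)).const_mul β).add measurable_fst)
      (measurable_snd.const_add _)
    have e1 : (fun ω => y ω i)
        = (fun p : ℝ × ℝ => β * (c i + p.2) + p.1) ∘ (fun ω => (ε ω i, ν ω i)) := by
      funext ω; exact hy' ω i
    have e2 : (fun ω => x ω j) = (fun p : ℝ × ℝ => c j + p.2) ∘ (fun ω => (ε ω j, ν ω j)) := by
      funext ω; exact hx' ω j
    rw [e1, e2]; exact h
  -- expansion of the quadratic forms
  have expand : ∀ (u v : Ω → Fin n → ℝ) (ω : Ω),
      u ω ⬝ᵥ (G *ᵥ v ω) = ∑ p ∈ Finset.univ ×ˢ Finset.univ,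
        G p.1 p.2 * (u ω p.1 * v ω p.2) := by
    intro u v ω
    rw [Finset.sum_product]
    simp only [dotProduct, mulVec, Finset.mul_sum]
    exact Finset.sum_congr rfl fun i _ => Finset.sum_congr rfl fun j _ => by ring
  have expandc : ∀ (u v : Fin n → ℝ),
      ∑ p ∈ Finset.univ ×ˢ Finset.univ, G p.1 p.2 * (u p.1 * v p.2) = u ⬝ᵥ (G *ᵥ v) := by
    intro u v
    rw [Finset.sum_product]
    simp only [dotProduct, mulVec, Finset.mul_sum]
    exact Finset.sum_congr rfl fun i _ => Finset.sum_congr rfl fun j _ => by ring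
  -- integrability of summands
  have hint_xx : ∀ p : Fin n × Fin n,
      Integrable (fun ω => G p.1 p.2 * (x ω p.1 * x ω p.2)) μ := by
    rintro ⟨i, j⟩
    by_cases hij : i = j
    · subst hij
      simp only [hGdiag i, zero_mul]
      exact integrable_zero _ _ _
    · have := ((hindxx i j hij).integrable_mul (hxint i) (hxint j)).const_mul (G i j)
      simpa [Pi.mul_apply] using this
  have hint_yx : ∀ p : Fin n × Fin n,
      Integrable (fun ω => G p.1 p.2 * (y ω p.1 * x ω p.2)) μ := by
    rintro ⟨i, j⟩
    by_cases hij : i = j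
    · subst hij
      simp only [hGdiag i, zero_mul]
      exact integrable_zero _ _ _
    · have := ((hindyx i j hij).integrable_mul (hyint i) (hxint j)).const_mul (G i j)
      simpa [Pi.mul_apply] using this
  -- integrals of summands
  have hterm_xx : ∀ p : Fin n × Fin n,
      ∫ ω, G p.1 p.2 * (x ω p.1 * x ω p.2) ∂μ = G p.1 p.2 * (c p.1 * c p.2) := by
    rintro ⟨i, j⟩
    by_cases hij : i = j
    · subst hij; simp [hGdiag i]
    · dsimp only
      rw [integral_const_mul]
      have h := (hindxx i j hij).integral_mul_eq_mul_integral (hxint i).aestronglyMeasurable (hxint j).aestronglyMeasurable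
      have h2 : (fun ω => x ω i * x ω j) = (fun ω => x ω i) * (fun ω => x ω j) := rfl
      rw [h2, h, hxmean i, hxmean j]
  have hterm_yx : ∀ p : Fin n × Fin n,
      ∫ ω, G p.1 p.2 * (y ω p.1 * x ω p.2) ∂μ
        = G p.1 p.2 * ((β * c p.1 + m p.1) * c p.2) := by
    rintro ⟨i, j⟩
    by_cases hij : i = j
    · subst hij; simp [hGdiag i]
    · dsimp only
      rw [integral_const_mul]
      have h := (hindyx i j hij).integral_mul_eq_mul_integral (hyint i).aestronglyMeasurable (hxint j).aestronglyMeasurable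
      have h2 : (fun ω => y ω i * x ω j) = (fun ω => y ω i) * (fun ω => x ω j) := rfl
      rw [h2, h, hymean i, hxmean j]
  -- algebraic facts
  have hGc : G *ᵥ c = ℓ := by
    rw [hc, hℓ, Matrix.mulVec_add, Matrix.mulVec_mulVec, Matrix.mulVec_mulVec, hGZ, hGW]
    simp
  have hWdotℓ : ∀ v : Fin L → ℝ, (W *ᵥ v) ⬝ᵥ ℓ = 0 := by
    intro v
    rw [hℓ]
    calc (W *ᵥ v) ⬝ᵥ (Z *ᵥ π) = (Z *ᵥ π) ⬝ᵥ (W *ᵥ v) := dotProduct_comm _ _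
      _ = ((Z *ᵥ π) ᵥ* W) ⬝ᵥ v := dotProduct_mulVec _ _ _
      _ = (Wᵀ *ᵥ (Z *ᵥ π)) ⬝ᵥ v := by rw [← Matrix.mulVec_transpose]
      _ = ((Wᵀ * Z) *ᵥ π) ⬝ᵥ v := by rw [Matrix.mulVec_mulVec]
      _ = 0 := by rw [hWZ]; simp
  have hcℓ : c ⬝ᵥ ℓ = ℓ ⬝ᵥ ℓ := by
    rw [hc, add_dotProduct, hWdotℓ δ, hℓ, add_zero]
  have hmℓ : m ⬝ᵥ ℓ = 0 := hWdotℓ α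
  -- the two integrals
  have Ixx : ∫ ω, x ω ⬝ᵥ (G *ᵥ x ω) ∂μ = ℓ ⬝ᵥ ℓ := by
    calc ∫ ω, x ω ⬝ᵥ (G *ᵥ x ω) ∂μ
        = ∫ ω, ∑ p ∈ Finset.univ ×ˢ Finset.univ, G p.1 p.2 * (x ω p.1 * x ω p.2) ∂μ := by
          exact integral_congr_ae (Filter.Eventually.of_forall fun ω => expand x x ω)
      _ = ∑ p ∈ Finset.univ ×ˢ Finset.univ, ∫ ω, G p.1 p.2 * (x ω p.1 * x ω p.2) ∂μ :=
          integral_finset_sum _ fun p _ => hint_xx p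
      _ = ∑ p ∈ Finset.univ ×ˢ Finset.univ, G p.1 p.2 * (c p.1 * c p.2) :=
          Finset.sum_congr rfl fun p _ => hterm_xx p
      _ = c ⬝ᵥ (G *ᵥ c) := expandc c c
      _ = ℓ ⬝ᵥ ℓ := by rw [hGc, hcℓ]
  have Iyx : ∫ ω, y ω ⬝ᵥ (G *ᵥ x ω) ∂μ = β * (ℓ ⬝ᵥ ℓ) := by
    calc ∫ ω, y ω ⬝ᵥ (G *ᵥ x ω) ∂μ
        = ∫ ω, ∑ p ∈ Finset.univ ×ˢ Finset.univ, G p.1 p.2 * (y ω p.1 * x ω p.2) ∂μ := by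
          exact integral_congr_ae (Filter.Eventually.of_forall fun ω => expand y x ω)
      _ = ∑ p ∈ Finset.univ ×ˢ Finset.univ, ∫ ω, G p.1 p.2 * (y ω p.1 * x ω p.2) ∂μ :=
          integral_finset_sum _ fun p _ => hint_yx p
      _ = ∑ p ∈ Finset.univ ×ˢ Finset.univ, G p.1 p.2 * ((β * c p.1 + m p.1) * c p.2) :=
          Finset.sum_congr rfl fun p _ => hterm_yx p
      _ = (fun i => β * c i + m i) ⬝ᵥ (G *ᵥ c) := expandc (fun i => β * c i + m i) c
      _ = β * (c ⬝ᵥ ℓ) + m ⬝ᵥ ℓ := by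
          have hf : (fun i => β * c i + m i) = β • c + m := by
            funext i; simp [Pi.add_apply, Pi.smul_apply]
          rw [hGc, hf, add_dotProduct, smul_dotProduct, smul_eq_mul]
      _ = β * (ℓ ⬝ᵥ ℓ) := by rw [hcℓ, hmℓ, add_zero]
  refine ⟨Ixx, Iyx, fun hℓ0 => ?_⟩
  rw [Ixx, Iyx]
  have hne : ℓ ⬝ᵥ ℓ ≠ 0 := fun h => hℓ0 (dotProduct_self_eq_zero.mp h)
  rw [mul_div_assoc, div_self hne, mul_one]
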